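/- Suppose S/I' has a graded minimal free resolution 0 → ⊕_{i=1}^t S(−b_i) → ⊕_{j=1}^{t+1} S(−a_j) → S → S/I' → 0 with 0 < a_j < N for all j, 0 < b_i ≤ N for all i, and exactly r−1 of the b_i equal N, where I' is the saturated ideal of a finite set of points 𝒩 in P^2. Then dim(S/I')_k = |𝒩| for all k ≥ N−2 and dim(S/I')_{N−3} = |𝒩| − (r−1); equivalently defect S_k(𝒩) = 0 for k > N−3 and defect S_{N−3}(𝒩) = r−1. -/

import Mathlib

open MvPolynomial

noncomputable section

/-- The polynomial ring `ℂ[x_0,…,x_n]`. -/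
abbrev MvP (n : ℕ) := MvPolynomial (Fin (n + 1)) ℂ

/-- The Jacobian ideal of `f`, spanned by its partial derivatives. -/
def jacobianIdeal {n : ℕ} (f : MvP n) : Ideal (MvP n) :=
  Ideal.span (Set.range fun i => pderiv i f)

/-- The dimension of the degree `k` graded piece of `S/I`. -/
def gradedPieceDim {n : ℕ} (I : Ideal (MvP n)) (k : ℕ) : ℕ :=
  Module.finrank ℂ
    (↥(homogeneousSubmodule (Fin (n + 1)) ℂ k) ⧸
      (Submodule.comap (homogeneousSubmodule (Fin (n + 1)) ℂ k).subtype
        (Submodule.restrictScalars ℂ I)))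

/-- `dim M(f)_k`, the dimension of the degree `k` piece of the Milnor algebra `S/J_f`. -/
def milnorDim {n : ℕ} (f : MvP n) (k : ℕ) : ℕ :=
  gradedPieceDim (jacobianIdeal f) k

/-- The Hilbert–Poincaré series of `S/I` as a power series over `ℤ`. -/
def hilbertSeries {n : ℕ} (I : Ideal (MvP n)) : PowerSeries ℤ :=
  PowerSeries.mk fun k => (gradedPieceDim I k : ℤ)

/-- The projective hypersurface `f = 0` is smooth: the partial derivatives have no
common zero besides the origin. -/
def IsSmoothHypersurface {n : ℕ} (f : MvP n) : Prop :=
  ∀ x : Fin (n + 1) → ℂ, (∀ i, eval x (pderiv i f) = 0) → x = 0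

/-- The Hessian matrix of `f` evaluated at `p`. -/
def hessianAt {n : ℕ} (f : MvP n) (p : Fin (n + 1) → ℂ) :
    Matrix (Fin (n + 1)) (Fin (n + 1)) ℂ :=
  Matrix.of fun i j => eval p (pderiv i (pderiv j f))

/-- All singular points of the projective hypersurface `f = 0` are nodes
(ordinary double points): at any singular point the Hessian has the maximal
possible rank `n` for a singular point of a cone. -/
def IsNodal {n : ℕ} (f : MvP n) : Prop :=
  ∀ p : Fin (n + 1) → ℂ, p ≠ 0 → (∀ i, eval p (pderiv i f) = 0) →
    (hessianAt f p).rank = n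

/-- `𝒩` is a set of affine representatives (one for each projective point) of the
singular locus of the projective hypersurface `f = 0`. -/
def RepresentsSingLocus {n : ℕ} (f : MvP n) (𝒩 : Finset (Fin (n + 1) → ℂ)) : Prop :=
  (∀ p ∈ 𝒩, p ≠ 0 ∧ ∀ i, eval p (pderiv i f) = 0) ∧
  (∀ p : Fin (n + 1) → ℂ, p ≠ 0 → (∀ i, eval p (pderiv i f) = 0) →
      ∃ q ∈ 𝒩, ∃ c : ℂ, c ≠ 0 ∧ p = c • q) ∧
  (∀ p ∈ 𝒩, ∀ q ∈ 𝒩, (∃ c : ℂ, c ≠ 0 ∧ p = c • q) → p = q)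

/-- The `ℂ`-linear map `(a_0,…,a_n) ↦ Σ a_i ∂f/∂x_i`. -/
def jacobianPairing {n : ℕ} (f : MvP n) : (Fin (n + 1) → MvP n) →ₗ[ℂ] MvP n :=
  ∑ i : Fin (n + 1),
    (LinearMap.mulRight ℂ (pderiv i f)).comp
      (LinearMap.proj (R := ℂ) (φ := fun _ : Fin (n + 1) => MvP n) i)

/-- The space of syzygies `Σ a_i ∂f/∂x_i = 0` with all `a_i` homogeneous of degree `m`.
Via `ω = Σ ± a_i dx_0 ∧ … ∧ \hat{dx_i} ∧ … ∧ dx_n` this is the degree `m + n` part of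
the kernel of `Ω^n → Ω^{n+1}` in the Koszul complex `K^*(f)`. -/
def syzygySubmodule {n : ℕ} (f : MvP n) (m : ℕ) :
    Submodule ℂ (Fin (n + 1) → MvP n) :=
  (⨅ i : Fin (n + 1),
      Submodule.comap (LinearMap.proj (R := ℂ) (φ := fun _ : Fin (n + 1) => MvP n) i)
        (homogeneousSubmodule (Fin (n + 1)) ℂ m)) ⊓
    LinearMap.ker (jacobianPairing f)

/-- The elementary (Koszul/trivial) syzygy `h·(…, f_j, …, -f_i, …)` attached to indices
`i, j` and a coefficient `h`. -/
def elementarySyzygy {n : ℕ} (f : MvP n) (i j : Fin (n + 1)) (h : MvP n) :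
    Fin (n + 1) → MvP n :=
  fun k => (if k = i then h * pderiv j f else 0) - (if k = j then h * pderiv i f else 0)

/-- The trivial (Koszul) syzygies of degree `m` among the partial derivatives of `f`,
where `f` is homogeneous of degree `N`; they are spanned by the elementary syzygies
with homogeneous coefficients `h` of degree `m - (N - 1)`.  This is the degree `m + n`
part of the image of `Ω^{n-1} → Ω^n` in the Koszul complex `K^*(f)`. -/
def trivialSyzygies {n : ℕ} (f : MvP n) (N m : ℕ) :
    Submodule ℂ (Fin (n + 1) → MvP n) :=
  Submodule.span ℂ
    {a | ∃ i j : Fin (n + 1), ∃ d : ℕ, ∃ h : MvP n,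
      m = d + (N - 1) ∧ h ∈ homogeneousSubmodule (Fin (n + 1)) ℂ d ∧
      a = elementarySyzygy f i j h}

/-- `dim H^n(K^*(f))_{m+n}`: the dimension of the space of syzygies of degree `m`
among the partial derivatives of `f` (of degree `N`), modulo the trivial ones. -/
def koszulSyzygyDim {n : ℕ} (f : MvP n) (N m : ℕ) : ℕ :=
  Module.finrank ℂ
    (↥(syzygySubmodule f m) ⧸
      Submodule.comap (syzygySubmodule f m).subtype (trivialSyzygies f N m))

/-- `mdr(D)`: the minimal degree of a nontrivial syzygy among the partial derivatives,
i.e. `min {q | H^n(K^*(f))_{q+n} ≠ 0}`. -/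
def mdr {n : ℕ} (f : MvP n) (N : ℕ) : ℕ :=
  sInf {m | ¬ syzygySubmodule f m ≤ trivialSyzygies f N m}

/-- `ct(D)`: the coincidence threshold
`max {q | dim M(f)_k = dim M(f_s)_k for all k ≤ q}`. -/
def coincidenceThreshold {n : ℕ} (f fs : MvP n) : ℕ :=
  sSup {q | ∀ k ≤ q, milnorDim f k = milnorDim fs k}

/-- `st(D)`: the stability threshold, the minimal `q` from which on the dimensions
`dim M(f)_k` are constant (for a hypersurface with isolated singularities this
constant value is the total Tjurina number `τ(D)`). -/
def stabilityThreshold {n : ℕ} (f : MvP n) : ℕ :=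
  sInf {q | ∀ k, q ≤ k → milnorDim f k = milnorDim f q}

/-- The degree `k` homogeneous polynomials vanishing at all points of `𝒩`. -/
def vanishingSubmodule {n : ℕ} (𝒩 : Finset (Fin (n + 1) → ℂ)) (k : ℕ) :
    Submodule ℂ (MvP n) :=
  homogeneousSubmodule (Fin (n + 1)) ℂ k ⊓
    ⨅ p ∈ 𝒩, LinearMap.ker ((aeval p : MvP n →ₐ[ℂ] ℂ).toLinearMap)

/-- The defect (superabundance) `defect S_k(𝒩) = |𝒩| - codim {h ∈ S_k | h|_𝒩 = 0}`. -/
def defect {n : ℕ} (k : ℕ) (𝒩 : Finset (Fin (n + 1) → ℂ)) : ℕ :=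
  𝒩.card -
    (Module.finrank ℂ ↥(homogeneousSubmodule (Fin (n + 1)) ℂ k) -
      Module.finrank ℂ ↥(vanishingSubmodule 𝒩 k))

namespace St19

abbrev S3 := MvPolynomial (Fin 3) ℂ
abbrev Sk (k : ℕ) : Submodule ℂ S3 := homogeneousSubmodule (Fin 3) ℂ k

/-- Equiv between degree-k exponent vectors and Sym. -/
def degSetEquiv (k : ℕ) : {d : Fin 3 →₀ ℕ // d.degree = k} ≃ Sym (Fin 3) k where
  toFun d := ⟨Finsupp.toMultiset d.1, by
    rw [Finsupp.card_toMultiset]; simpa [Finsupp.degree_apply, Finsupp.sum] using d.2⟩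
  invFun m := ⟨Multiset.toFinsupp m.1, by
    have := m.2
    simp [Finsupp.degree_apply, ← Finsupp.card_toMultiset, Finsupp.toMultiset_toFinsupp, this]⟩
  left_inv d := by ext : 1; simp
  right_inv m := by ext : 1; simp

instance degSetFintype (k : ℕ) : Fintype {d : Fin 3 →₀ ℕ // d.degree = k} :=
  Fintype.ofEquiv _ (degSetEquiv k).symm

lemma card_degSet (k : ℕ) : Fintype.card {d : Fin 3 →₀ ℕ // d.degree = k} = (k+2).choose 2 := by
  rw [Fintype.card_congr (degSetEquiv k), Sym.card_sym_eq_choose]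
  have h2 : Fintype.card (Fin 3) + k - 1 = k + 2 := by simp; omega
  rw [h2]
  have : k ≤ k + 2 := by omega
  have := Nat.choose_symm this
  simpa [show k + 2 - k = 2 by omega] using this.symm

def skBasis (k : ℕ) : Module.Basis {d : Fin 3 →₀ ℕ // d.degree = k} ℂ ↥(Sk k) := by
  have h : Sk k = restrictSupport ℂ {d : Fin 3 →₀ ℕ | d.degree = k} :=
    homogeneousSubmodule_eq_finsupp_supported (Fin 3) ℂ k
  exact (basisRestrictSupport ℂ _).map (LinearEquiv.ofEq _ _ h.symm)

instance skFinite (k : ℕ) : FiniteDimensional ℂ ↥(Sk k) :=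
  Module.Finite.of_basis (skBasis k)

lemma finrank_Sk (k : ℕ) : Module.finrank ℂ ↥(Sk k) = (k+2).choose 2 := by
  rw [Module.finrank_eq_card_basis (skBasis k), card_degSet]

/-- graded piece with shift, truncated to ⊥ when shift exceeds degree -/
def hd (k a : ℕ) : Submodule ℂ S3 := if a ≤ k then Sk (k - a) else ⊥

def fN (k a : ℕ) : ℕ := if a ≤ k then (k - a + 2).choose 2 else 0

def pT (x : ℤ) (a : ℕ) : ℤ := (x + 2 - a) * (x + 1 - a)

lemma hd_pos {k a : ℕ} (h : a ≤ k) : hd k a = Sk (k - a) := if_pos h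
lemma hd_neg {k a : ℕ} (h : ¬ a ≤ k) : hd k a = ⊥ := if_neg h

instance hdFinite (k a : ℕ) : FiniteDimensional ℂ ↥(hd k a) := by
  rw [hd]
  by_cases h : a ≤ k
  · rw [if_pos h]; infer_instance
  · rw [if_neg h]; infer_instance

lemma finrank_hd (k a : ℕ) : Module.finrank ℂ ↥(hd k a) = fN k a := by
  rw [hd, fN]
  by_cases h : a ≤ k
  · rw [if_pos h, if_pos h, finrank_Sk]
  · rw [if_neg h, if_neg h, finrank_bot]

lemma choose_two_mul (m : ℕ) : (m.choose 2) * 2 = m * (m - 1) := by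
  rw [Nat.choose_two_right]
  refine Nat.div_mul_cancel ?_
  rcases m with _ | n
  · simp
  · exact (by simpa [Nat.succ_sub_one, mul_comm] using (Nat.even_mul_succ_self n) :
      Even ((n+1) * n)).two_dvd

/-- 2·fN equals the quadratic polynomial value when `a ≤ k + 2`. -/
lemma two_fN (k a : ℕ) (h : a ≤ k + 2) : (2 * fN k a : ℤ) = pT k a := by
  rw [pT, fN]
  split
  · rename_i hak
    set n := k - a with hn
    have h2 : (n+2).choose 2 * 2 = (n+2)*(n+1) := by
      simpa using choose_two_mul (n+2)
    have hk : (k:ℤ) + 2 - a = (n:ℤ) + 2 := by omega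
    have hk1 : (k:ℤ) + 1 - a = (n:ℤ) + 1 := by omega
    rw [hk, hk1]
    have h3 : ((n+2).choose 2 : ℤ) * 2 = ((n:ℤ)+2)*((n:ℤ)+1) := by exact_mod_cast h2
    linarith
  · rename_i hak
    have ha : a = k + 1 ∨ a = k + 2 := by omega
    rcases ha with h | h <;> subst h <;> push_cast <;> ring

/-- component of a product with a homogeneous right factor -/
lemma homogeneousComponent_mul_homogeneous (x g : S3) (d m : ℕ) (hg : g.IsHomogeneous d) :
    homogeneousComponent m (x * g) =
      (if d ≤ m then homogeneousComponent (m - d) x else 0) * g := by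
  induction x using MvPolynomial.induction_on' with
  | monomial e c =>
    have hmon : (monomial e c : S3).IsHomogeneous e.degree := isHomogeneous_monomial _ rfl
    have hmul : ((monomial e c : S3) * g).IsHomogeneous (e.degree + d) := hmon.mul hg
    rw [homogeneousComponent_of_mem hmul, homogeneousComponent_of_mem hmon]
    by_cases hdm : d ≤ m
    · by_cases he : m = e.degree + d
      · rw [if_pos he, if_pos hdm, if_pos (by omega)]
      · rw [if_neg he, if_pos hdm, if_neg (by omega), zero_mul]
    · rw [if_neg (by omega), if_neg hdm, zero_mul]
  | add p q hp hq =>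
    rw [add_mul, map_add, hp, hq]
    split_ifs <;> simp [map_add, add_mul]

lemma eval_smul_of_isHomogeneous (h : S3) (n : ℕ) (hh : h.IsHomogeneous n)
    (c : ℂ) (x : Fin 3 → ℂ) : eval (c • x) h = c ^ n * eval x h := by
  rw [eval_eq, eval_eq, Finset.mul_sum]
  refine Finset.sum_congr rfl fun e he => ?_
  have hdeg : e.degree = n := by
    rw [Finsupp.degree_eq_weight_one]; exact hh (MvPolynomial.mem_support_iff.mp he)
  have : (∏ i ∈ e.support, (c • x) i ^ e i)
      = c ^ n * ∏ i ∈ e.support, x i ^ e i := by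
    simp only [Pi.smul_apply, smul_eq_mul, mul_pow]
    rw [Finset.prod_mul_distrib, Finset.prod_pow_eq_pow_sum]
    congr 1
    rw [← hdeg]; rfl
  rw [this]; ring

lemma isHomogeneous_of_mem_hd {k a : ℕ} {p : S3} (h : a ≤ k) (hp : p ∈ hd k a) :
    p.IsHomogeneous (k - a) := by rwa [hd_pos h] at hp
lemma eq_zero_of_mem_hd {k a : ℕ} {p : S3} (h : ¬ a ≤ k) (hp : p ∈ hd k a) :
    p = 0 := by rw [hd_neg h] at hp; simpa using hp

lemma hd_mul_mem {k a : ℕ} {y g : S3} (hy : y ∈ hd k a) (hg : g.IsHomogeneous a) :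
    y * g ∈ Sk k := by
  by_cases h : a ≤ k
  · rw [hd_pos h] at hy
    have : (y * g).IsHomogeneous (k - a + a) := IsHomogeneous.mul hy hg
    rwa [Nat.sub_add_cancel h] at this
  · rw [hd_neg h] at hy
    simp only [Submodule.mem_bot] at hy
    simp [hy, Submodule.zero_mem]

lemma M_mul_mem {k aj bi : ℕ} {Mji x : S3} (hM1 : Mji.IsHomogeneous (bi - aj))
    (hM2 : Mji ≠ 0 → aj ≤ bi) (hx : x ∈ hd k bi) : Mji * x ∈ hd k aj := by
  by_cases hz : Mji = 0
  · simp [hz, Submodule.zero_mem]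
  have hab := hM2 hz
  by_cases hbk : bi ≤ k
  · have hx' : x.IsHomogeneous (k - bi) := by rwa [hd_pos hbk] at hx
    have hm := hM1.mul hx'
    rw [hd_pos (le_trans hab hbk)]
    rwa [show (bi - aj) + (k - bi) = k - aj by omega] at hm
  · have hx0 : x = 0 := by rw [hd_neg hbk] at hx; simpa using hx
    simp [hx0, Submodule.zero_mem]

variable (t : ℕ) (I' : Ideal S3)
  (a : Fin (t+1) → ℕ) (b : Fin t → ℕ)
  (v : Fin (t+1) → S3)
  (M : Fin (t+1) → Fin t → S3)

def phiMap (hv : ∀ j, (v j).IsHomogeneous (a j)) (k : ℕ) :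
    (∀ j, ↥(hd k (a j))) →ₗ[ℂ] ↥(Sk k) where
  toFun y := ⟨∑ j, (y j : S3) * v j,
    Submodule.sum_mem _ fun j _ => hd_mul_mem (y j).2 (hv j)⟩
  map_add' y z := by
    ext
    simp [add_mul, Finset.sum_add_distrib]
  map_smul' c y := by
    ext
    simp [Finset.smul_sum, smul_mul_assoc]

def psiMap (hM : ∀ j i, (M j i).IsHomogeneous (b i - a j) ∧ (M j i ≠ 0 → a j ≤ b i))
    (k : ℕ) : (∀ i, ↥(hd k (b i))) →ₗ[ℂ] (∀ j, ↥(hd k (a j))) where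
  toFun x := fun j => ⟨∑ i, M j i * (x i : S3),
    Submodule.sum_mem _ fun i _ => M_mul_mem (hM j i).1 (hM j i).2 (x i).2⟩
  map_add' x z := by
    funext j
    ext
    simp [mul_add, Finset.sum_add_distrib]
  map_smul' c x := by
    funext j
    ext
    simp [Finset.smul_sum, mul_smul_comm]

lemma dim_identity
    (hv : ∀ j, (v j).IsHomogeneous (a j))
    (hM : ∀ j i, (M j i).IsHomogeneous (b i - a j) ∧ (M j i ≠ 0 → a j ≤ b i))
    (hspan : Ideal.span (Set.range v) = I')
    (hinj : ∀ x : Fin t → S3, (∀ j, ∑ i, M j i * x i = 0) → x = 0)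
    (hexact : ∀ y : Fin (t + 1) → S3,
      (∑ j, y j * v j) = 0 ↔ ∃ x : Fin t → S3, ∀ j, y j = ∑ i, M j i * x i)
    (k : ℕ) :
    gradedPieceDim (n := 2) I' k + ∑ j, fN k (a j) = fN k 0 + ∑ i, fN k (b i) := by
  classical
  set φ := phiMap t a v hv k with hφ
  set ψ := psiMap t a b M hM k with hψ
  -- injectivity of ψ
  have hψinj : Function.Injective ψ := by
    rw [← LinearMap.ker_eq_bot]
    rw [LinearMap.ker_eq_bot']
    intro x hx
    have h0 : (fun i => (x i : S3)) = 0 := by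
      apply hinj
      intro j
      have := congrFun hx j
      exact congrArg Subtype.val this
    funext i
    exact Subtype.ext (congrFun h0 i)
  -- M ∘ v = 0
  have hMv : ∀ i, ∑ j, M j i * v j = 0 := by
    intro i
    refine (hexact (fun j => M j i)).mpr ⟨Pi.single i 1, fun j => ?_⟩
    simp [Pi.single_apply, mul_ite]
  -- ker φ = range ψ
  have hker : LinearMap.ker φ = LinearMap.range ψ := by
    apply le_antisymm
    · intro y hy
      have hy0 : (∑ j, (y j : S3) * v j) = 0 := by
        have := congrArg Subtype.val (LinearMap.mem_ker.mp hy)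
        simpa [hφ, phiMap] using this
      obtain ⟨x, hx⟩ := (hexact _).mp hy0
      refine ⟨fun i => ⟨if b i ≤ k then homogeneousComponent (k - b i) (x i) else 0, ?_⟩, ?_⟩
      · by_cases hbk : b i ≤ k
        · rw [if_pos hbk, hd_pos hbk]
          exact homogeneousComponent_mem _ _
        · rw [if_neg hbk]; exact Submodule.zero_mem _
      · funext j
        apply Subtype.ext
        show (∑ i, M j i * (if b i ≤ k then homogeneousComponent (k - b i) (x i) else 0))
          = (y j : S3)
        by_cases haj : a j ≤ k
        · have hyj : (y j : S3).IsHomogeneous (k - a j) :=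
            isHomogeneous_of_mem_hd haj (y j).2
          have hyc : (y j : S3) = homogeneousComponent (k - a j) (y j : S3) := by
            rw [homogeneousComponent_of_mem hyj, if_pos rfl]
          conv_rhs => rw [hyc, hx j, map_sum]
          refine Finset.sum_congr rfl fun i _ => ?_
          by_cases hMz : M j i = 0
          · simp [hMz]
          have hab : a j ≤ b i := (hM j i).2 hMz
          rw [mul_comm (M j i) (x i), homogeneousComponent_mul_homogeneous _ _ _ _ (hM j i).1]
          by_cases hbk : b i ≤ k
          · rw [if_pos (by omega : b i - a j ≤ k - a j), if_pos hbk,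
              show k - a j - (b i - a j) = k - b i by omega, mul_comm]
          · rw [if_neg (by omega : ¬ b i - a j ≤ k - a j), if_neg hbk, zero_mul, mul_zero]
        · have hyj : (y j : S3) = 0 := eq_zero_of_mem_hd haj (y j).2
          rw [hyj]
          refine Finset.sum_eq_zero fun i _ => ?_
          by_cases hMz : M j i = 0
          · simp [hMz]
          have hab : a j ≤ b i := (hM j i).2 hMz
          rw [if_neg (by omega : ¬ b i ≤ k), mul_zero]
    · rintro z ⟨x, rfl⟩
      rw [LinearMap.mem_ker]
      apply Subtype.ext
      show (∑ j, (∑ i, M j i * (x i : S3)) * v j) = 0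
      have : (∑ j, (∑ i, M j i * (x i : S3)) * v j)
          = ∑ i, (x i : S3) * ∑ j, M j i * v j := by
        simp only [Finset.sum_mul, Finset.mul_sum]
        rw [Finset.sum_comm]
        exact Finset.sum_congr rfl fun i _ => Finset.sum_congr rfl fun j _ => by ring
      rw [this]
      simp [hMv]
  -- range φ = graded piece of I'
  have hrange : LinearMap.range φ
      = Submodule.comap (Sk k).subtype (Submodule.restrictScalars ℂ I') := by
    apply le_antisymm
    · rintro z ⟨y, rfl⟩
      simp only [Submodule.mem_comap, Submodule.restrictScalars_mem]
      show (∑ j, (y j : S3) * v j) ∈ I'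
      rw [← hspan]
      exact Ideal.sum_mem _ fun j _ =>
        Ideal.mul_mem_left _ _ (Ideal.subset_span ⟨j, rfl⟩)
    · rintro z hz
      simp only [Submodule.mem_comap, Submodule.restrictScalars_mem] at hz
      rw [← hspan] at hz
      obtain ⟨c, hc⟩ := (Ideal.mem_span_range_iff_exists_fun).mp hz
      refine ⟨fun j => ⟨if a j ≤ k then homogeneousComponent (k - a j) (c j) else 0, ?_⟩, ?_⟩
      · by_cases haj : a j ≤ k
        · rw [if_pos haj, hd_pos haj]; exact homogeneousComponent_mem _ _
        · rw [if_neg haj]; exact Submodule.zero_mem _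
      · apply Subtype.ext
        show (∑ j, (if a j ≤ k then homogeneousComponent (k - a j) (c j) else 0) * v j)
          = (z : S3)
        have hzc : (z : S3) = homogeneousComponent k (z : S3) := by
          rw [homogeneousComponent_of_mem z.2, if_pos rfl]
        have hc' : (∑ i, c i * v i) = (z : S3) := hc
        calc (∑ j, (if a j ≤ k then homogeneousComponent (k - a j) (c j) else 0) * v j)
            = ∑ j, homogeneousComponent k (c j * v j) :=
              Finset.sum_congr rfl fun j _ =>
                (homogeneousComponent_mul_homogeneous _ _ _ _ (hv j)).symm
          _ = homogeneousComponent k (∑ j, c j * v j) := (map_sum _ _ _).symm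
          _ = (z : S3) := by rw [hc']; exact hzc.symm
    -- counting
  have e2 : Module.finrank ℂ (∀ i, ↥(hd k (b i))) = ∑ i, fN k (b i) := by
    rw [Module.finrank_pi_fintype]
    exact Finset.sum_congr rfl fun i _ => finrank_hd k (b i)
  have e1 : Module.finrank ℂ (∀ j, ↥(hd k (a j))) = ∑ j, fN k (a j) := by
    rw [Module.finrank_pi_fintype]
    exact Finset.sum_congr rfl fun j _ => finrank_hd k (a j)
  have e3 := LinearMap.finrank_range_add_finrank_ker φ
  have e4 : Module.finrank ℂ ↥(LinearMap.ker φ) = ∑ i, fN k (b i) := by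
    rw [hker, LinearMap.finrank_range_of_inj hψinj, e2]
  have e5 : gradedPieceDim (n := 2) I' k
      + Module.finrank ℂ ↥(LinearMap.range φ) = Module.finrank ℂ ↥(Sk k) := by
    have hgr : gradedPieceDim (n := 2) I' k
        = Module.finrank ℂ (↥(Sk k) ⧸
            (Submodule.comap (Sk k).subtype (Submodule.restrictScalars ℂ I'))) := rfl
    rw [hgr, ← hrange]
    exact Submodule.finrank_quotient_add_finrank _
  have e6 : Module.finrank ℂ ↥(Sk k) = fN k 0 := by
    rw [finrank_Sk, fN, if_pos (Nat.zero_le k), Nat.sub_zero]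
  rw [e1] at e3
  omega

section Eval
variable (𝒩 : Finset (Fin 3 → ℂ))

def Kvan : Submodule ℂ S3 :=
  ⨅ p ∈ 𝒩, LinearMap.ker ((aeval p : S3 →ₐ[ℂ] ℂ).toLinearMap)

lemma aeval_eq_eval' (p : Fin 3 → ℂ) (h : S3) : aeval p h = eval p h := by
  rw [aeval_def, Algebra.algebraMap_self, eval]
  rfl

lemma mem_Kvan (h : S3) : h ∈ Kvan 𝒩 ↔ ∀ p ∈ 𝒩, eval p h = 0 := by
  simp [Kvan, Submodule.mem_iInf, aeval_eq_eval']

/-- evaluation map on the degree-k piece -/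
def Emap (k : ℕ) : ↥(Sk k) →ₗ[ℂ] (↥𝒩 → ℂ) :=
  LinearMap.pi fun q =>
    ((aeval (q : Fin 3 → ℂ) : S3 →ₐ[ℂ] ℂ).toLinearMap).comp (Sk k).subtype

lemma Emap_apply (k : ℕ) (z : ↥(Sk k)) (q : ↥𝒩) :
    Emap 𝒩 k z q = eval (q : Fin 3 → ℂ) (z : S3) := aeval_eq_eval' _ _

lemma ker_Emap (k : ℕ) :
    LinearMap.ker (Emap 𝒩 k) = Submodule.comap (Sk k).subtype (Kvan 𝒩) := by
  ext z
  rw [LinearMap.mem_ker, Submodule.mem_comap, Submodule.subtype_apply, mem_Kvan, funext_iff]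
  constructor
  · intro hz p hp
    simpa [Emap_apply] using hz ⟨p, hp⟩
  · intro hz q
    simp [Emap_apply, hz q.1 q.2]

variable (I' : Ideal S3)
  (hI' : ∀ h : MvPolynomial (Fin 3) ℂ,
      h ∈ I' ↔ ∀ p ∈ 𝒩, ∀ c : ℂ, eval (c • p) h = 0)

include hI' in
lemma comap_I'_eq (k : ℕ) :
    Submodule.comap (Sk k).subtype (Submodule.restrictScalars ℂ I')
      = Submodule.comap (Sk k).subtype (Kvan 𝒩) := by
  ext z
  simp only [Submodule.mem_comap, Submodule.restrictScalars_mem, Submodule.subtype_apply,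
    mem_Kvan]
  rw [hI']
  constructor
  · intro hz p hp
    have := hz p hp 1
    simpa using this
  · intro hz p hp c
    rw [eval_smul_of_isHomogeneous (z : S3) k z.2, hz p hp, mul_zero]

include hI' in
lemma gradedPieceDim_eq_rank_Emap (k : ℕ) :
    gradedPieceDim (n := 2) I' k
      = Module.finrank ℂ ↥(LinearMap.range (Emap 𝒩 k)) := by
  have hgr : gradedPieceDim (n := 2) I' k
      = Module.finrank ℂ (↥(Sk k) ⧸
          (Submodule.comap (Sk k).subtype (Submodule.restrictScalars ℂ I'))) := rfl
  rw [hgr, comap_I'_eq 𝒩 I' hI', ← ker_Emap]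
  exact LinearEquiv.finrank_eq (LinearMap.quotKerEquivRange (Emap 𝒩 k))

set_option synthInstance.maxHeartbeats 1000000 in
include hI' in
lemma finrank_Sk_split (k : ℕ) :
    Module.finrank ℂ ↥(Sk k)
      = gradedPieceDim (n := 2) I' k + Module.finrank ℂ ↥(vanishingSubmodule (n := 2) 𝒩 k) := by
  have h1 : Module.finrank ℂ ↥(vanishingSubmodule (n := 2) 𝒩 k)
      = Module.finrank ℂ ↥(Submodule.comap (Sk k).subtype (Kvan 𝒩)) := by
    have h2 : Submodule.comap (Sk k).subtype (Sk k ⊓ Kvan 𝒩)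
        = Submodule.comap (Sk k).subtype (Kvan 𝒩) := by
      rw [Submodule.comap_inf, Submodule.comap_subtype_self, top_inf_eq]
    have h3 : Module.finrank ℂ ↥(Submodule.comap (Sk k).subtype (Sk k ⊓ Kvan 𝒩))
        = Module.finrank ℂ ↥(Sk k ⊓ Kvan 𝒩) :=
      LinearEquiv.finrank_eq (Submodule.comapSubtypeEquivOfLe inf_le_left)
    rw [h2] at h3
    have hV : vanishingSubmodule (n := 2) 𝒩 k = Sk k ⊓ Kvan 𝒩 := rfl
    rw [hV]
    exact h3.symm
  have h4 := Submodule.finrank_quotient_add_finrank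
    (Submodule.comap (Sk k).subtype (Submodule.restrictScalars ℂ I'))
  rw [comap_I'_eq 𝒩 I' hI' k] at h4
  have hgr : gradedPieceDim (n := 2) I' k
      = Module.finrank ℂ (↥(Sk k) ⧸
          (Submodule.comap (Sk k).subtype (Submodule.restrictScalars ℂ I'))) := rfl
  rw [hgr, h1, comap_I'_eq 𝒩 I' hI']
  omega

include hI' in
lemma defect_eq (k : ℕ) :
    defect (n := 2) k 𝒩 = 𝒩.card - gradedPieceDim (n := 2) I' k := by
  have hd : defect (n := 2) k 𝒩 = 𝒩.card -
      (Module.finrank ℂ ↥(Sk k) - Module.finrank ℂ ↥(vanishingSubmodule (n := 2) 𝒩 k)) := rfl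
  rw [hd, finrank_Sk_split 𝒩 I' hI' k]
  omega

lemma exists_nonzero_coord {p : Fin 3 → ℂ} (hp : p ≠ 0) : ∃ i, p i ≠ 0 := by
  by_contra hc
  push_neg at hc
  exact hp (funext hc)

lemma Emap_surj
    (hpts : ∀ p ∈ 𝒩, p ≠ (0 : Fin 3 → ℂ))
    (hsep : ∀ p ∈ 𝒩, ∀ q ∈ 𝒩, (∃ c : ℂ, c ≠ 0 ∧ p = c • q) → p = q)
    (k : ℕ) (hk : 𝒩.card ≤ k) :
    LinearMap.range (Emap 𝒩 k) = ⊤ := by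
  classical
  rw [eq_top_iff]
  intro u _
  rw [pi_eq_sum_univ u]
  refine Submodule.sum_mem _ fun q _ => Submodule.smul_mem _ _ ?_
  set p : Fin 3 → ℂ := (q : Fin 3 → ℂ) with hpdef
  have hp𝒩 : p ∈ 𝒩 := q.2
  obtain ⟨i0, hi0⟩ := exists_nonzero_coord (hpts p hp𝒩)
  have hℓ : ∀ q' : Fin 3 → ℂ, ∃ ℓ : S3, ℓ.IsHomogeneous 1 ∧ eval p ℓ ≠ 0 ∧
      (q' ∈ 𝒩 → q' ≠ p → eval q' ℓ = 0) := by
    intro q'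
    by_cases hq' : q' ∈ 𝒩 ∧ q' ≠ p
    · obtain ⟨hq'𝒩, hq'p⟩ := hq'
      have hq0 : q' ≠ 0 := hpts q' hq'𝒩
      have hnprop : ¬ ∃ c : ℂ, c ≠ 0 ∧ p = c • q' := by
        rintro ⟨c, hc0, hpc⟩
        exact hq'p (hsep p hp𝒩 q' hq'𝒩 ⟨c, hc0, hpc⟩).symm
      have hminor : ∃ i j, q' j * p i - q' i * p j ≠ 0 := by
        by_contra hcon
        push_neg at hcon
        obtain ⟨j0, hj0⟩ := exists_nonzero_coord hq0
        have hps : ∀ i, p i = (p j0 / q' j0) * q' i := by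
          intro i
          have h := hcon i j0
          rw [div_mul_eq_mul_div, eq_div_iff hj0]
          linear_combination h
        have hpj0 : p j0 ≠ 0 := by
          intro h0
          apply hpts p hp𝒩
          funext i
          rw [hps i, h0]
          simp
        exact hnprop ⟨p j0 / q' j0, div_ne_zero hpj0 hj0, funext fun i => by
          rw [hps i]; simp⟩
      obtain ⟨i, j, hij⟩ := hminor
      refine ⟨C (q' j) * X i - C (q' i) * X j, ?_, ?_, fun _ _ => ?_⟩
      · have h1 : (C (q' j) * X i : S3).IsHomogeneous 1 := by
          simpa using (isHomogeneous_C (Fin 3) (q' j)).mul (isHomogeneous_X ℂ i)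
        have h2 : (C (q' i) * X j : S3).IsHomogeneous 1 := by
          simpa using (isHomogeneous_C (Fin 3) (q' i)).mul (isHomogeneous_X ℂ j)
        exact h1.sub h2
      · simpa using hij
      · simp
        ring
    · refine ⟨X i0, isHomogeneous_X _ _, by simpa using hi0, fun h1 h2 => absurd ⟨h1, h2⟩ hq'⟩
  choose ℓf hℓ1 hℓp hℓ0 using hℓ
  set s : Finset (Fin 3 → ℂ) := 𝒩.erase p with hsdef
  have hcard1 : 1 ≤ 𝒩.card := Finset.card_pos.mpr ⟨p, hp𝒩⟩
  have hscard : s.card = 𝒩.card - 1 := Finset.card_erase_of_mem hp𝒩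
  set e := k - s.card with hedef
  have hek : e + s.card = k := by omega
  set h : S3 := (X i0) ^ e * ∏ q' ∈ s, ℓf q' with hhdef
  have hmem : h ∈ Sk k := by
    have h1 : ((X i0 : S3) ^ e).IsHomogeneous e := by
      simpa using (isHomogeneous_X ℂ i0).pow e
    have h2 : (∏ q' ∈ s, ℓf q').IsHomogeneous s.card := by
      simpa using IsHomogeneous.prod s ℓf (fun _ => 1) (fun q' _ => hℓ1 q')
    have := h1.mul h2
    rwa [hek] at this
  have hevalp : eval p h ≠ 0 := by
    rw [hhdef, map_mul, map_pow, map_prod]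
    exact mul_ne_zero (pow_ne_zero _ (by simpa using hi0))
      (Finset.prod_ne_zero_iff.mpr fun q' _ => hℓp q')
  have hevalq : ∀ q'' ∈ 𝒩, q'' ≠ p → eval q'' h = 0 := by
    intro q'' h𝒩 hne
    rw [hhdef, map_mul, map_prod]
    have : eval q'' (ℓf q'') = 0 := hℓ0 q'' h𝒩 hne
    rw [Finset.prod_eq_zero (Finset.mem_erase.mpr ⟨hne, h𝒩⟩) this, mul_zero]
  have hdelta : (fun j : ↥𝒩 => if q = j then (1:ℂ) else 0)
      = (eval p h)⁻¹ • Emap 𝒩 k ⟨h, hmem⟩ := by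
    funext j
    rw [Pi.smul_apply, Emap_apply, smul_eq_mul]
    by_cases hjq : q = j
    · rw [if_pos hjq, ← hjq]
      exact (inv_mul_cancel₀ hevalp).symm
    · rw [if_neg hjq]
      rw [hevalq j.1 j.2 (fun hh => hjq (Subtype.ext (hh ▸ rfl)).symm), mul_zero]
  rw [hdelta]
  exact Submodule.smul_mem _ _ (LinearMap.mem_range_self _ _)

end Eval

def Qf (t : ℕ) (a : Fin (t+1) → ℕ) (b : Fin t → ℕ) (x : ℤ) : ℤ :=
  pT x 0 - ∑ j, pT x (a j) + ∑ i, pT x (b i)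

lemma pT_step (x : ℤ) (a : ℕ) : pT (x+1) a + pT (x-1) a = 2 * pT x a + 2 := by
  unfold pT; ring

lemma Qf_step (t : ℕ) (a : Fin (t+1) → ℕ) (b : Fin t → ℕ) (x : ℤ) :
    Qf t a b (x+1) + Qf t a b (x-1) = 2 * Qf t a b x := by
  unfold Qf
  have h1 : ∑ j, pT (x+1) (a j) + ∑ j, pT (x-1) (a j)
      = 2 * ∑ j, pT x (a j) + 2 * (t+1) := by
    rw [← Finset.sum_add_distrib, Finset.mul_sum]
    rw [Finset.sum_congr rfl fun j _ => pT_step x (a j)]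
    rw [Finset.sum_add_distrib]
    simp [Finset.card_univ, mul_comm]
  have h2 : ∑ i, pT (x+1) (b i) + ∑ i, pT (x-1) (b i)
      = 2 * ∑ i, pT x (b i) + 2 * t := by
    rw [← Finset.sum_add_distrib, Finset.mul_sum]
    rw [Finset.sum_congr rfl fun i _ => pT_step x (b i)]
    rw [Finset.sum_add_distrib]
    simp [Finset.card_univ, mul_comm]
  have h0 := pT_step x 0
  push_cast at h1 h2 ⊢
  linarith

lemma Qf_const (t : ℕ) (a : Fin (t+1) → ℕ) (b : Fin t → ℕ) (Mth : ℕ) (c : ℤ)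
    (hM : ∀ k : ℕ, Mth ≤ k → Qf t a b k = c) :
    ∀ x : ℤ, x ≤ (Mth : ℤ) → Qf t a b x = c := by
  have hdown : ∀ n : ℕ, Qf t a b ((Mth:ℤ) - n) = c := by
    intro n
    induction n using Nat.strong_induction_on with
    | _ n ih =>
      match n, ih with
      | 0, _ => simpa using hM Mth le_rfl
      | 1, _ =>
        have hstep := Qf_step t a b (Mth:ℤ)
        have h1 : Qf t a b ((Mth:ℤ)+1) = c := by
          have := hM (Mth+1) (by omega)
          rwa [show ((Mth+1 : ℕ) : ℤ) = (Mth:ℤ)+1 by push_cast; ring] at this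
        have h0 : Qf t a b (Mth:ℤ) = c := by simpa using hM Mth le_rfl
        rw [show (Mth:ℤ) - ((1:ℕ):ℤ) = (Mth:ℤ) - 1 by push_cast; ring]
        linarith
      | (n+2), ih =>
        have hstep := Qf_step t a b ((Mth:ℤ) - ((n:ℤ)+1))
        rw [show (Mth:ℤ) - ((n:ℤ)+1) + 1 = (Mth:ℤ) - (n:ℕ) by push_cast; ring,
          show (Mth:ℤ) - ((n:ℤ)+1) - 1 = (Mth:ℤ) - ((n+2 : ℕ):ℤ) by push_cast; ring,
          show (Mth:ℤ) - ((n:ℤ)+1) = (Mth:ℤ) - ((n+1 : ℕ):ℤ) by push_cast; ring] at hstep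
        have i1 := ih n (by omega)
        have i2 := ih (n+1) (by omega)
        linarith
  intro x hx
  obtain ⟨n, rfl⟩ : ∃ n : ℕ, x = (Mth:ℤ) - n := ⟨(Mth - x).toNat, by omega⟩
  exact hdown n

end St19

/-- Let `𝒩` be a finite set of points in `ℙ^2` (given by nonzero,
pairwise non-proportional affine representatives) and `I'` its saturated homogeneous
ideal (the ideal of all polynomials vanishing on the cone over `𝒩`).  Suppose `S/I'` has
a graded minimal free resolution
`0 → ⊕_{i=1}^t S(-b_i) → ⊕_{j=1}^{t+1} S(-a_j) → S → S/I' → 0`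
with `0 < a_j < N` for all `j`, `0 < b_i ≤ N` for all `i`, and exactly `r - 1` of the
`b_i` equal to `N`.  Then `dim (S/I')_k = |𝒩|` for all `k ≥ N - 2` and
`dim (S/I')_{N-3} = |𝒩| - (r - 1)`; equivalently, `defect S_k(𝒩) = 0` for `k > N - 3`
and `defect S_{N-3}(𝒩) = r - 1`. -/


theorem statement19 (N r t : ℕ) (𝒩 : Finset (Fin 3 → ℂ))
    (hpts : ∀ p ∈ 𝒩, p ≠ (0 : Fin 3 → ℂ))
    (hsep : ∀ p ∈ 𝒩, ∀ q ∈ 𝒩, (∃ c : ℂ, c ≠ 0 ∧ p = c • q) → p = q)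
    (I' : Ideal (MvPolynomial (Fin 3) ℂ))
    (hI' : ∀ h : MvPolynomial (Fin 3) ℂ,
      h ∈ I' ↔ ∀ p ∈ 𝒩, ∀ c : ℂ, eval (c • p) h = 0)
    (a : Fin (t + 1) → ℕ) (b : Fin t → ℕ)
    (ha : ∀ j, 0 < a j ∧ a j < N) (hb : ∀ i, 0 < b i ∧ b i ≤ N)
    (hbN : (Finset.univ.filter fun i => b i = N).card = r - 1)
    (v : Fin (t + 1) → MvPolynomial (Fin 3) ℂ)
    (hv : ∀ j, (v j).IsHomogeneous (a j))
    (M : Fin (t + 1) → Fin t → MvPolynomial (Fin 3) ℂ)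
    (hM : ∀ j i, (M j i).IsHomogeneous (b i - a j) ∧ (M j i ≠ 0 → a j ≤ b i))
    (hmin : ∀ j i, MvPolynomial.coeff 0 (M j i) = 0)
    (hspan : Ideal.span (Set.range v) = I')
    (hinj : ∀ x : Fin t → MvPolynomial (Fin 3) ℂ,
      (∀ j, ∑ i, M j i * x i = 0) → x = 0)
    (hexact : ∀ y : Fin (t + 1) → MvPolynomial (Fin 3) ℂ,
      (∑ j, y j * v j) = 0 ↔
        ∃ x : Fin t → MvPolynomial (Fin 3) ℂ, ∀ j, y j = ∑ i, M j i * x i) :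
    (∀ k : ℕ, N ≤ k + 2 → gradedPieceDim (n := 2) I' k = 𝒩.card) ∧
    (∀ m : ℕ, m + 3 = N → gradedPieceDim (n := 2) I' m = 𝒩.card - (r - 1)) ∧
    (∀ k : ℕ, N < k + 3 → defect (n := 2) k 𝒩 = 0) ∧
    (∀ m : ℕ, m + 3 = N → defect (n := 2) m 𝒩 = r - 1) := by
  have hdim := fun k => St19.dim_identity t I' a b v M hv hM hspan hinj hexact k
  have hlarge : ∀ k : ℕ, 𝒩.card ≤ k → gradedPieceDim (n := 2) I' k = 𝒩.card := by
    intro k hk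
    rw [St19.gradedPieceDim_eq_rank_Emap 𝒩 I' hI' k, St19.Emap_surj 𝒩 hpts hsep k hk,
      finrank_top, Module.finrank_fintype_fun_eq_card, Fintype.card_coe]
  have hcast : ∀ k : ℕ, N ≤ k + 2 →
      2 * (gradedPieceDim (n := 2) I' k : ℤ) = St19.Qf t a b k := by
    intro k hk
    have keyz : (gradedPieceDim (n := 2) I' k : ℤ) + ∑ j, (St19.fN k (a j) : ℤ)
        = (St19.fN k 0 : ℤ) + ∑ i, (St19.fN k (b i) : ℤ) := by exact_mod_cast hdim k
    have e1 : ∑ j, 2 * (St19.fN k (a j) : ℤ) = ∑ j, St19.pT k (a j) :=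
      Finset.sum_congr rfl fun j _ => St19.two_fN k (a j) (by have := (ha j).2; omega)
    have e2 : ∑ i, 2 * (St19.fN k (b i) : ℤ) = ∑ i, St19.pT k (b i) :=
      Finset.sum_congr rfl fun i _ => St19.two_fN k (b i) (by have := (hb i).2; omega)
    have e3 : 2 * (St19.fN k 0 : ℤ) = St19.pT k 0 := St19.two_fN k 0 (by omega)
    have e4 : ∑ j, 2 * (St19.fN k (a j) : ℤ) = 2 * ∑ j, (St19.fN k (a j) : ℤ) := by
      rw [Finset.mul_sum]
    have e5 : ∑ i, 2 * (St19.fN k (b i) : ℤ) = 2 * ∑ i, (St19.fN k (b i) : ℤ) := by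
      rw [Finset.mul_sum]
    rw [St19.Qf, ← e3, ← e1, ← e2, e4, e5]
    linarith
  have hspec : ∀ m : ℕ, m + 3 = N →
      2 * (gradedPieceDim (n := 2) I' m : ℤ) + 2 * ((r - 1 : ℕ) : ℤ) = St19.Qf t a b m := by
    intro m hm
    have keyz : (gradedPieceDim (n := 2) I' m : ℤ) + ∑ j, (St19.fN m (a j) : ℤ)
        = (St19.fN m 0 : ℤ) + ∑ i, (St19.fN m (b i) : ℤ) := by exact_mod_cast hdim m
    have e1 : ∑ j, 2 * (St19.fN m (a j) : ℤ) = ∑ j, St19.pT m (a j) :=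
      Finset.sum_congr rfl fun j _ => St19.two_fN m (a j) (by have := (ha j).2; omega)
    have e3 : 2 * (St19.fN m 0 : ℤ) = St19.pT m 0 := St19.two_fN m 0 (by omega)
    have e4 : ∑ j, 2 * (St19.fN m (a j) : ℤ) = 2 * ∑ j, (St19.fN m (a j) : ℤ) := by
      rw [Finset.mul_sum]
    have e5 : ∑ i, 2 * (St19.fN m (b i) : ℤ) = 2 * ∑ i, (St19.fN m (b i) : ℤ) := by
      rw [Finset.mul_sum]
    have esplit : ∑ i, St19.pT m (b i)
        = ∑ i, 2 * (St19.fN m (b i) : ℤ)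
          + 2 * (((Finset.univ.filter fun i => b i = N).card : ℕ) : ℤ) := by
      rw [← Finset.sum_filter_add_sum_filter_not Finset.univ (fun i => b i = N)
        (fun i => St19.pT m (b i)),
        ← Finset.sum_filter_add_sum_filter_not Finset.univ (fun i => b i = N)
        (fun i => 2 * (St19.fN m (b i) : ℤ))]
      have hpt2 : ∀ i ∈ Finset.univ.filter (fun i => b i = N), St19.pT m (b i) = 2 := by
        intro i hi
        have hbi : b i = N := (Finset.mem_filter.mp hi).2
        rw [hbi, ← hm, St19.pT]
        push_cast
        ring
      have hf1 : ∑ i ∈ Finset.univ.filter (fun i => b i = N), St19.pT m (b i)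
          = 2 * (((Finset.univ.filter fun i => b i = N).card : ℕ) : ℤ) := by
        rw [Finset.sum_congr rfl hpt2, Finset.sum_const, nsmul_eq_mul, mul_comm]
      have hf2 : ∑ i ∈ Finset.univ.filter (fun i => b i = N), 2 * (St19.fN m (b i) : ℤ)
          = 0 := by
        refine Finset.sum_eq_zero fun i hi => ?_
        have hbi : b i = N := (Finset.mem_filter.mp hi).2
        rw [St19.fN, if_neg (by omega)]
        simp
      have hf3 : ∑ i ∈ Finset.univ.filter (fun i => ¬ b i = N), St19.pT m (b i)
          = ∑ i ∈ Finset.univ.filter (fun i => ¬ b i = N), 2 * (St19.fN m (b i) : ℤ) := by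
        refine Finset.sum_congr rfl fun i hi => ?_
        have hbi : ¬ b i = N := (Finset.mem_filter.mp hi).2
        exact (St19.two_fN m (b i) (by have := (hb i).2; omega)).symm
      rw [hf1, hf2, hf3]
      ring
    rw [St19.Qf, ← e3, ← e1, esplit, hbN, e4, e5]
    linarith
  have hQlarge : ∀ k : ℕ, max 𝒩.card N ≤ k → St19.Qf t a b k = 2 * (𝒩.card : ℤ) := by
    intro k hk
    rw [← hcast k (by omega), hlarge k (by omega)]
  have hQall : ∀ k : ℕ, St19.Qf t a b k = 2 * (𝒩.card : ℤ) := by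
    intro k
    rcases le_or_gt (max 𝒩.card N) k with hle | hlt
    · exact hQlarge k hle
    · exact St19.Qf_const t a b (max 𝒩.card N) _ hQlarge k (by exact_mod_cast hlt.le)
  have hH1 : ∀ k : ℕ, N ≤ k + 2 → gradedPieceDim (n := 2) I' k = 𝒩.card := by
    intro k hk
    have h1 := hcast k hk
    rw [hQall k] at h1
    omega
  have hH2 : ∀ m : ℕ, m + 3 = N →
      (gradedPieceDim (n := 2) I' m) + (r - 1) = 𝒩.card := by
    intro m hm
    have h1 := hspec m hm
    rw [hQall m] at h1
    omega
  refine ⟨fun k hk => hH1 k hk, fun m hm => by have := hH2 m hm; omega, ?_, ?_⟩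
  · intro k hk
    rw [St19.defect_eq 𝒩 I' hI' k, hH1 k (by omega)]
    omega
  · intro m hm
    rw [St19.defect_eq 𝒩 I' hI' m]
    have := hH2 m hm
    omega


end
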